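/- For i = 1, 2, let G_i be an m_i-γ_t-critical graph of order Δ(G_i) + m_i with minimum degree δ(G_i) ≥ 2, and let v_i ∈ V(G_i) be a vertex of maximum degree in G_i. If every connected component of the subgraph of G_i induced by V(G_i) − N[v_i] is a path P_2 (for each i), then the vertex amalgamation G of G_1 and G_2 at v_1 and v_2 is an (m_1 + m_2 − 1)-γ_t-critical graph of order Δ(G) + m_1 + m_2 − 1, where Δ(G) = Δ(G_1) + Δ(G_2). -/

import Mathlib

open scoped Classical

namespace SimpleGraph

variable {V : Type*}

/-- A set `S` is a total dominating set if every vertex is adjacent to a vertex of `S`. -/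
def IsTotalDomSet (G : SimpleGraph V) (S : Set V) : Prop :=
  ∀ v : V, ∃ u ∈ S, G.Adj v u

/-- The total domination number: minimum cardinality of a total dominating set. -/
noncomputable def totalDomNum (G : SimpleGraph V) [Fintype V] : ℕ :=
  sInf {n : ℕ | ∃ S : Finset V, G.IsTotalDomSet ↑S ∧ S.card = n}

/-- The graph obtained by deleting the vertex `v`. -/
def deleteVert (G : SimpleGraph V) (v : V) : SimpleGraph {u : V // u ≠ v} :=
  G.induce {u : V | u ≠ v}

/-- A support vertex is a vertex adjacent to a leaf (a vertex of degree one). -/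
noncomputable def IsSupportVertex (G : SimpleGraph V) [Fintype V] (v : V) : Prop :=
  ∃ u : V, G.Adj v u ∧ G.degree u = 1

/-- `G` is total domination vertex critical: it has no isolated vertex and deleting any
vertex that is not a support vertex decreases the total domination number. -/
noncomputable def IsTotalDomCritical (G : SimpleGraph V) [Fintype V] : Prop :=
  (∀ v : V, 0 < G.degree v) ∧
  ∀ v : V, ¬ G.IsSupportVertex v →
    (G.deleteVert v).totalDomNum < G.totalDomNum

/-- The vertex amalgamation of `G₁` and `G₂` identifying `v₁` with `v₂`. -/
def amalgamation {V₁ V₂ : Type*} (G₁ : SimpleGraph V₁) (G₂ : SimpleGraph V₂)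
    (v₁ : V₁) (v₂ : V₂) : SimpleGraph (V₁ ⊕ {x : V₂ // x ≠ v₂}) where
  Adj x y :=
    match x, y with
    | Sum.inl a, Sum.inl b => G₁.Adj a b
    | Sum.inl a, Sum.inr b => a = v₁ ∧ G₂.Adj v₂ b.1
    | Sum.inr a, Sum.inl b => b = v₁ ∧ G₂.Adj v₂ a.1
    | Sum.inr a, Sum.inr b => G₂.Adj a.1 b.1
  symm := by
    constructor
    rintro (a | a) (b | b) h
    · exact G₁.adj_symm h
    · exact h
    · exact h
    · exact G₂.adj_symm h
  loopless := by
    constructor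
    rintro (a | a) h
    · exact G₁.irrefl h
    · exact G₂.irrefl h

section AuxBasic

variable [Fintype V] {G : SimpleGraph V}

lemma tdn_le {S : Finset V} (h : G.IsTotalDomSet ↑S) : G.totalDomNum ≤ S.card :=
  Nat.sInf_le ⟨S, h, rfl⟩

lemma tdn_exists (h : ∀ w : V, ∃ u, G.Adj w u) :
    ∃ S : Finset V, G.IsTotalDomSet ↑S ∧ S.card = G.totalDomNum := by
  have hne : {n : ℕ | ∃ S : Finset V, G.IsTotalDomSet ↑S ∧ S.card = n}.Nonempty := by
    refine ⟨(Finset.univ : Finset V).card, Finset.univ, ?_, rfl⟩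
    intro v; obtain ⟨u, hu⟩ := h v; exact ⟨u, by simp, hu⟩
  obtain ⟨S, hS, hc⟩ := Nat.sInf_mem hne
  exact ⟨S, hS, hc⟩

lemma not_support (hδ : 2 ≤ G.minDegree) (v : V) : ¬ G.IsSupportVertex v := by
  rintro ⟨u, -, hu⟩
  have := G.minDegree_le_degree u
  omega

lemma exists_adj_ne (hδ : 2 ≤ G.minDegree) (w x : V) : ∃ u, u ≠ x ∧ G.Adj w u := by
  have h2 : 2 ≤ G.degree w := le_trans hδ (G.minDegree_le_degree w)
  rw [← card_neighborFinset_eq_degree] at h2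
  obtain ⟨a, ha, b, hb, hab⟩ :=
    Finset.one_lt_card.mp (show 1 < (G.neighborFinset w).card by omega)
  rw [mem_neighborFinset] at ha hb
  rcases eq_or_ne a x with rfl | h
  · exact ⟨b, fun hbx => hab hbx.symm, hb⟩
  · exact ⟨a, h, ha⟩

lemma nonempty_of_minDegree (hδ : 2 ≤ G.minDegree) : Nonempty V := by
  by_contra h
  rw [not_nonempty_iff] at h
  rw [minDegree, Finset.univ_eq_empty] at hδ
  simp at hδ

lemma tdn_deleteVert_le {x : V} {S : Finset V} (hx : ∀ u ∈ S, u ≠ x)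
    (hdom : ∀ w : V, w ≠ x → ∃ u ∈ S, G.Adj w u) :
    (G.deleteVert x).totalDomNum ≤ S.card := by
  have hT : (G.deleteVert x).IsTotalDomSet ↑(S.subtype (· ≠ x)) := by
    rintro ⟨w, hw⟩
    obtain ⟨u, hu, hadj⟩ := hdom w hw
    refine ⟨⟨u, hx u hu⟩, by simpa using hu, hadj⟩
  calc (G.deleteVert x).totalDomNum ≤ (S.subtype (· ≠ x)).card := tdn_le hT
    _ = S.card := by
        rw [Finset.card_subtype, Finset.filter_true_of_mem hx]

lemma crit_witness (hδ : 2 ≤ G.minDegree) (hcrit : G.IsTotalDomCritical) (x : V) :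
    ∃ S : Finset V, (∀ u ∈ S, u ≠ x) ∧ (∀ w : V, w ≠ x → ∃ u ∈ S, G.Adj w u) ∧
      S.card + 1 ≤ G.totalDomNum := by
  have hlt := hcrit.2 x (not_support hδ x)
  have hiso : ∀ w : {u : V // u ≠ x}, ∃ u, (G.deleteVert x).Adj w u := by
    rintro ⟨w, hw⟩
    obtain ⟨u, hux, hadj⟩ := exists_adj_ne hδ w x
    exact ⟨⟨u, hux⟩, hadj⟩
  obtain ⟨T, hT, hTc⟩ := tdn_exists (G := G.deleteVert x) hiso
  refine ⟨T.map ⟨Subtype.val, Subtype.val_injective⟩, ?_, ?_, ?_⟩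
  · intro u hu
    simp only [Finset.mem_map, Function.Embedding.coeFn_mk] at hu
    obtain ⟨⟨u', hu'⟩, -, rfl⟩ := hu
    exact hu'
  · intro w hw
    obtain ⟨u, hu, hadj⟩ := hT ⟨w, hw⟩
    exact ⟨u.1, Finset.mem_coe.mpr (Finset.mem_map_of_mem _ (Finset.mem_coe.mp hu)), hadj⟩
  · rw [Finset.card_map, hTc]; omega

lemma two_le_tdn (hδ : 2 ≤ G.minDegree) : 2 ≤ G.totalDomNum := by
  have hne : Nonempty V := nonempty_of_minDegree hδ
  have hadj : ∀ w : V, ∃ u, G.Adj w u := by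
    intro w
    obtain ⟨u, -, hu⟩ := exists_adj_ne hδ w w
    exact ⟨u, hu⟩
  obtain ⟨S, hS, hc⟩ := tdn_exists hadj
  obtain ⟨u, hu, -⟩ := hS (Classical.arbitrary V)
  obtain ⟨t, ht, hadj'⟩ := hS u
  have : 1 < S.card := Finset.one_lt_card.mpr ⟨u, hu, t, ht, (hadj'.ne)⟩
  omega

end AuxBasic

section AuxPartner

variable [Fintype V] {G : SimpleGraph V} {v : V}

lemma mem_Rset {r : V} (hr : r ≠ v) (hr' : ¬ G.Adj v r) :
    r ∈ ({v} ∪ G.neighborSet v)ᶜ := by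
  intro h
  rcases h with h | h
  · exact hr h
  · exact hr' h

lemma partner
    (hc : ∀ c : (G.induce ({v} ∪ G.neighborSet v)ᶜ).ConnectedComponent,
      Nonempty ((G.induce ({v} ∪ G.neighborSet v)ᶜ).induce c.supp ≃g pathGraph 2))
    {r : V} (hr : r ≠ v) (hr' : ¬ G.Adj v r) :
    ∃ p, (p ≠ v ∧ ¬ G.Adj v p) ∧ G.Adj r p ∧
      ∀ q, q ≠ v → ¬ G.Adj v q → G.Adj r q → q = p := by
  set R : Set V := ({v} ∪ G.neighborSet v)ᶜ with hR
  set H : SimpleGraph R := G.induce R with hH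
  have hrR : r ∈ R := mem_Rset hr hr'
  set r' : R := ⟨r, hrR⟩ with hr'def
  set c : H.ConnectedComponent := H.connectedComponentMk r' with hc'
  obtain ⟨e⟩ := hc c
  have hmem : r' ∈ c.supp := rfl
  set rr : c.supp := ⟨r', hmem⟩ with hrr
  set i : Fin 2 := e rr with hi
  set o : Fin 2 := ⟨1 - i.1, by omega⟩ with ho
  have hio : i ≠ o := by
    have := i.2
    intro h
    rw [Fin.ext_iff] at h
    simp only [ho] at h
    omega
  have hadj2 : (pathGraph 2).Adj i o := by
    rw [pathGraph_adj]
    have := i.2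
    simp only [ho]
    omega
  set pp : c.supp := e.symm o with hpp
  have hadjH : (H.induce c.supp).Adj rr pp := by
    have : (H.induce c.supp).Adj (e.symm i) (e.symm o) := e.symm.map_adj_iff.mpr hadj2
    rwa [hi, RelIso.symm_apply_apply] at this
  have hadjG : G.Adj r (pp.1 : V) := hadjH
  have hppR : (pp.1 : V) ∈ R := pp.1.2
  have hppv : (pp.1 : V) ≠ v ∧ ¬ G.Adj v (pp.1 : V) := by
    have hnot : ¬((pp.1 : V) ∈ ({v} : Set V) ∪ G.neighborSet v) := hppR
    exact ⟨fun h => hnot (Or.inl (by simp [h])), fun h => hnot (Or.inr h)⟩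
  refine ⟨pp.1, hppv, hadjG, ?_⟩
  intro q hq hq' hadjq
  have hqR : q ∈ R := mem_Rset hq hq'
  set q' : R := ⟨q, hqR⟩ with hq'def
  have hadjHq : H.Adj r' q' := hadjq
  have hqmem : q' ∈ c.supp := by
    rw [ConnectedComponent.mem_supp_iff, hc']
    exact (ConnectedComponent.connectedComponentMk_eq_of_adj hadjHq.symm)
  set qq : c.supp := ⟨q', hqmem⟩ with hqq
  have h1 : e qq ≠ i := by
    rw [hi]
    intro h
    have : qq = rr := e.injective h
    have : q = r := congrArg (fun z : c.supp => (z.1 : V)) this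
    exact hadjq.ne' this
  have h2 : e qq = o := by
    have hi2 := i.2
    have he2 := (e qq).2
    have h1v : (e qq).1 ≠ i.1 := fun h => h1 (Fin.ext h)
    have hov : o.1 = 1 - i.1 := rfl
    apply Fin.ext
    omega
  have : qq = pp := by
    rw [hpp]
    apply e.injective
    rw [RelIso.apply_symm_apply]
    exact h2
  exact congrArg (fun z : c.supp => (z.1 : V)) this

lemma card_Rfin :
    (Finset.univ.filter (fun r => r ≠ v ∧ ¬ G.Adj v r)).card + (1 + G.degree v)
      = Fintype.card V := by
  have hsplit := Finset.card_filter_add_card_filter_not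
    (s := (Finset.univ : Finset V)) (p := fun r => r ≠ v ∧ ¬ G.Adj v r)
  have hneg : (Finset.univ.filter (fun r => ¬(r ≠ v ∧ ¬ G.Adj v r)))
      = insert v (G.neighborFinset v) := by
    ext r
    simp only [Finset.mem_filter, Finset.mem_univ, true_and, Finset.mem_insert,
      mem_neighborFinset]
    constructor
    · intro h
      by_cases hrv : r = v
      · exact Or.inl hrv
      · push_neg at h
        exact Or.inr (h hrv)
    · rintro (rfl | h)
      · intro hh; exact hh.1 rfl
      · intro hh; exact hh.2 h
  have hvadj : v ∉ G.neighborFinset v := by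
    rw [mem_neighborFinset]; exact G.irrefl
  rw [hneg, Finset.card_insert_of_notMem hvadj, card_neighborFinset_eq_degree] at hsplit
  rw [Finset.card_univ] at hsplit
  omega

end AuxPartner


/-- amalgamating two extremal critical graphs along vertices of maximum
degree, all of whose components off the closed neighborhood are `P₂`'s, yields an
`(m₁ + m₂ - 1)`-`γₜ`-critical graph of order `Δ(G) + m₁ + m₂ - 1`,
where `Δ(G) = Δ(G₁) + Δ(G₂)`. -/
theorem stmt2 {V₁ V₂ : Type*} [Fintype V₁] [Fintype V₂]
    (G₁ : SimpleGraph V₁) (G₂ : SimpleGraph V₂) (m₁ m₂ : ℕ) (v₁ : V₁) (v₂ : V₂)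
    (h₁ : G₁.IsTotalDomCritical) (hm₁ : G₁.totalDomNum = m₁)
    (h₂ : G₂.IsTotalDomCritical) (hm₂ : G₂.totalDomNum = m₂)
    (hn₁ : Fintype.card V₁ = G₁.maxDegree + m₁)
    (hn₂ : Fintype.card V₂ = G₂.maxDegree + m₂)
    (hδ₁ : 2 ≤ G₁.minDegree) (hδ₂ : 2 ≤ G₂.minDegree)
    (hv₁ : G₁.degree v₁ = G₁.maxDegree) (hv₂ : G₂.degree v₂ = G₂.maxDegree)
    (hc₁ : ∀ c : (G₁.induce ({v₁} ∪ G₁.neighborSet v₁)ᶜ).ConnectedComponent,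
      Nonempty ((G₁.induce ({v₁} ∪ G₁.neighborSet v₁)ᶜ).induce c.supp ≃g pathGraph 2))
    (hc₂ : ∀ c : (G₂.induce ({v₂} ∪ G₂.neighborSet v₂)ᶜ).ConnectedComponent,
      Nonempty ((G₂.induce ({v₂} ∪ G₂.neighborSet v₂)ᶜ).induce c.supp ≃g pathGraph 2)) :
    (amalgamation G₁ G₂ v₁ v₂).IsTotalDomCritical ∧
    (amalgamation G₁ G₂ v₁ v₂).totalDomNum = m₁ + m₂ - 1 ∧
    (amalgamation G₁ G₂ v₁ v₂).maxDegree = G₁.maxDegree + G₂.maxDegree ∧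
    Fintype.card (V₁ ⊕ {x : V₂ // x ≠ v₂}) =
      (amalgamation G₁ G₂ v₁ v₂).maxDegree + (m₁ + m₂ - 1) := by
  classical
  set A := amalgamation G₁ G₂ v₁ v₂ with hAdef
  have adj_ll : ∀ a b : V₁, A.Adj (Sum.inl a) (Sum.inl b) ↔ G₁.Adj a b := fun a b => Iff.rfl
  have adj_lr : ∀ (a : V₁) (b : {x : V₂ // x ≠ v₂}),
      A.Adj (Sum.inl a) (Sum.inr b) ↔ (a = v₁ ∧ G₂.Adj v₂ b.1) := fun a b => Iff.rfl
  have adj_rl : ∀ (a : {x : V₂ // x ≠ v₂}) (b : V₁),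
      A.Adj (Sum.inr a) (Sum.inl b) ↔ (b = v₁ ∧ G₂.Adj v₂ a.1) := fun a b => Iff.rfl
  have adj_rr : ∀ a b : {x : V₂ // x ≠ v₂},
      A.Adj (Sum.inr a) (Sum.inr b) ↔ G₂.Adj a.1 b.1 := fun a b => Iff.rfl
  set inlE : V₁ ↪ V₁ ⊕ {x : V₂ // x ≠ v₂} := ⟨Sum.inl, Sum.inl_injective⟩ with hinlE
  set inrE : {x : V₂ // x ≠ v₂} ↪ V₁ ⊕ {x : V₂ // x ≠ v₂} :=
    ⟨Sum.inr, Sum.inr_injective⟩ with hinrE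
  set valE : {x : V₂ // x ≠ v₂} ↪ V₂ := ⟨Subtype.val, Subtype.val_injective⟩ with hvalE
  set f : V₂ → V₁ ⊕ {x : V₂ // x ≠ v₂} :=
    fun y => if h : y = v₂ then Sum.inl v₁ else Sum.inr ⟨y, h⟩ with hfdef
  have hfv : f v₂ = Sum.inl v₁ := dif_pos rfl
  have hfne : ∀ (y : V₂) (h : y ≠ v₂), f y = Sum.inr ⟨y, h⟩ := fun y h => dif_neg h
  have hfinj : Function.Injective f := by
    intro s t hst
    by_cases hs : s = v₂ <;> by_cases ht : t = v₂
    · rw [hs, ht]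
    · rw [hs, hfv, hfne t ht] at hst; exact (Sum.inl_ne_inr hst).elim
    · rw [ht, hfv, hfne s hs] at hst; exact (Sum.inr_ne_inl hst).elim
    · rw [hfne s hs, hfne t ht] at hst
      exact congrArg Subtype.val (Sum.inr_injective hst)
  -- basic numbers
  have hm2₁ : 2 ≤ m₁ := hm₁ ▸ two_le_tdn hδ₁
  have hm2₂ : 2 ≤ m₂ := hm₂ ▸ two_le_tdn hδ₂
  set Rfin₁ : Finset V₁ := Finset.univ.filter (fun r => r ≠ v₁ ∧ ¬ G₁.Adj v₁ r) with hRfin₁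
  set Rfin₂ : Finset V₂ := Finset.univ.filter (fun r => r ≠ v₂ ∧ ¬ G₂.Adj v₂ r) with hRfin₂
  have Rcard₁ : Rfin₁.card + 1 = m₁ := by
    have := card_Rfin (G := G₁) (v := v₁)
    rw [hn₁, hv₁, ← hRfin₁] at this
    omega
  have Rcard₂ : Rfin₂.card + 1 = m₂ := by
    have := card_Rfin (G := G₂) (v := v₂)
    rw [hn₂, hv₂, ← hRfin₂] at this
    omega
  -- no isolated vertices in A
  have hAiso : ∀ w : V₁ ⊕ {x : V₂ // x ≠ v₂}, ∃ u, A.Adj w u := by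
    intro w
    cases w with
    | inl z =>
        obtain ⟨u, hu⟩ := (G₁.degree_pos_iff_exists_adj z).mp (h₁.1 z)
        exact ⟨Sum.inl u, (adj_ll z u).mpr hu⟩
    | inr y =>
        obtain ⟨u, hu⟩ := (G₂.degree_pos_iff_exists_adj y.1).mp (h₂.1 y.1)
        by_cases huv : u = v₂
        · have had := hu
          rw [huv] at had
          exact ⟨Sum.inl v₁, (adj_rl y v₁).mpr ⟨rfl, had.symm⟩⟩
        · exact ⟨Sum.inr ⟨u, huv⟩, (adj_rr y ⟨u, huv⟩).mpr hu⟩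
  -- upper bound
  have hub : A.totalDomNum ≤ m₁ + m₂ - 1 := by
    obtain ⟨S₁, hS₁x, hS₁dom, hS₁c⟩ := crit_witness hδ₁ h₁ v₁
    obtain ⟨S₂, hS₂x, hS₂dom, hS₂c⟩ := crit_witness hδ₂ h₂ v₂
    rw [hm₁] at hS₁c; rw [hm₂] at hS₂c
    obtain ⟨a0, ha0⟩ := (G₁.degree_pos_iff_exists_adj v₁).mp (h₁.1 v₁)
    set D := insert (Sum.inl a0 : V₁ ⊕ {x : V₂ // x ≠ v₂}) (S₁.map inlE ∪ S₂.image f)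
      with hDdef
    have hD : A.IsTotalDomSet ↑D := by
      intro w
      cases w with
      | inl z =>
          by_cases hz : z = v₁
          · refine ⟨Sum.inl a0, Finset.mem_coe.mpr (Finset.mem_insert_self _ _), ?_⟩
            rw [hz]
            exact (adj_ll v₁ a0).mpr ha0
          · obtain ⟨u, hu, hadj⟩ := hS₁dom z hz
            refine ⟨Sum.inl u, Finset.mem_coe.mpr (Finset.mem_insert_of_mem ?_),
              (adj_ll z u).mpr hadj⟩
            exact Finset.mem_union_left _ (Finset.mem_map_of_mem inlE hu)
      | inr y =>
          obtain ⟨u, hu, hadj⟩ := hS₂dom y.1 y.2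
          have hu2 : u ≠ v₂ := hS₂x u hu
          refine ⟨Sum.inr ⟨u, hu2⟩, Finset.mem_coe.mpr (Finset.mem_insert_of_mem ?_),
            (adj_rr y ⟨u, hu2⟩).mpr hadj⟩
          refine Finset.mem_union_right _ ?_
          rw [← hfne u hu2]
          exact Finset.mem_image_of_mem f hu
    have hle := tdn_le hD
    have hcard : D.card ≤ m₁ + m₂ - 1 := by
      calc D.card ≤ (S₁.map inlE ∪ S₂.image f).card + 1 := Finset.card_insert_le _ _
        _ ≤ (S₁.map inlE).card + (S₂.image f).card + 1 := by
            have := Finset.card_union_le (S₁.map inlE) (S₂.image f)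
            omega
        _ ≤ S₁.card + S₂.card + 1 := by
            rw [Finset.card_map]
            have := Finset.card_image_le (s := S₂) (f := f)
            omega
        _ ≤ m₁ + m₂ - 1 := by omega
    exact le_trans hle hcard
  -- lower bound
  have hlb : ∀ S : Finset (V₁ ⊕ {x : V₂ // x ≠ v₂}),
      A.IsTotalDomSet ↑S → m₁ + m₂ ≤ S.card + 1 := by
    intro S hS
    set A₁ : Finset V₁ := Finset.univ.filter (fun a => Sum.inl a ∈ S) with hA₁
    set B₁ : Finset {x : V₂ // x ≠ v₂} := Finset.univ.filter (fun b => Sum.inr b ∈ S) with hB₁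
    have memA₁ : ∀ a : V₁, a ∈ A₁ ↔ Sum.inl a ∈ S := by
      intro a; rw [hA₁, Finset.mem_filter]; simp
    have memB₁ : ∀ b : {x : V₂ // x ≠ v₂}, b ∈ B₁ ↔ Sum.inr b ∈ S := by
      intro b; rw [hB₁, Finset.mem_filter]; simp
    have hcardS : A₁.card + B₁.card = S.card := by
      have hdisj : Disjoint (A₁.map inlE) (B₁.map inrE) := by
        rw [Finset.disjoint_left]
        rintro w hw hw'
        rw [Finset.mem_map] at hw hw'
        obtain ⟨a, -, rfl⟩ := hw
        obtain ⟨b, -, hb⟩ := hw'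
        exact Sum.inr_ne_inl hb
      have hunion : A₁.map inlE ∪ B₁.map inrE = S := by
        ext w
        rw [Finset.mem_union, Finset.mem_map, Finset.mem_map]
        constructor
        · rintro (⟨a, ha, rfl⟩ | ⟨b, hb, rfl⟩)
          · exact (memA₁ a).mp ha
          · exact (memB₁ b).mp hb
        · intro hw
          cases w with
          | inl a => exact Or.inl ⟨a, (memA₁ a).mpr hw, rfl⟩
          | inr b => exact Or.inr ⟨b, (memB₁ b).mpr hw, rfl⟩
      calc A₁.card + B₁.card = (A₁.map inlE).card + (B₁.map inrE).card := by
            rw [Finset.card_map, Finset.card_map]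
        _ = (A₁.map inlE ∪ B₁.map inrE).card := (Finset.card_union_of_disjoint hdisj).symm
        _ = S.card := by rw [hunion]
    have domA : ∀ x : V₁, x ≠ v₁ → ∃ a ∈ A₁, G₁.Adj x a := by
      intro x hx
      obtain ⟨u, hu, hadj⟩ := hS (Sum.inl x)
      cases u with
      | inl a => exact ⟨a, (memA₁ a).mpr (Finset.mem_coe.mp hu), (adj_ll x a).mp hadj⟩
      | inr b => exact absurd ((adj_lr x b).mp hadj).1 hx
    have domB : ∀ y : {x : V₂ // x ≠ v₂}, (∃ b ∈ B₁, G₂.Adj y.1 b.1)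
        ∨ (Sum.inl v₁ ∈ S ∧ G₂.Adj v₂ y.1) := by
      intro y
      obtain ⟨u, hu, hadj⟩ := hS (Sum.inr y)
      cases u with
      | inl a =>
          have h' := (adj_rl y a).mp hadj
          exact Or.inr ⟨h'.1 ▸ (Finset.mem_coe.mp hu), h'.2⟩
      | inr b =>
          exact Or.inl ⟨b, (memB₁ b).mpr (Finset.mem_coe.mp hu), (adj_rr y b).mp hadj⟩
    have domv : (∃ a ∈ A₁, G₁.Adj v₁ a) ∨ (∃ b ∈ B₁, G₂.Adj v₂ b.1) := by
      obtain ⟨u, hu, hadj⟩ := hS (Sum.inl v₁)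
      cases u with
      | inl a => exact Or.inl ⟨a, (memA₁ a).mpr (Finset.mem_coe.mp hu), (adj_ll v₁ a).mp hadj⟩
      | inr b => exact Or.inr ⟨b, (memB₁ b).mpr (Finset.mem_coe.mp hu),
          ((adj_lr v₁ b).mp hadj).2⟩
    have hATDS : (∃ a ∈ A₁, G₁.Adj v₁ a) → m₁ ≤ A₁.card := by
      rintro ⟨a, ha, hadj⟩
      have hT : G₁.IsTotalDomSet ↑A₁ := by
        intro x
        by_cases hx : x = v₁
        · exact ⟨a, Finset.mem_coe.mpr ha, hx ▸ hadj⟩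
        · obtain ⟨q, hq, hqadj⟩ := domA x hx
          exact ⟨q, Finset.mem_coe.mpr hq, hqadj⟩
      have := tdn_le hT
      omega
    have hATDS1 : m₁ ≤ A₁.card + 1 := by
      obtain ⟨a0, ha0⟩ := (G₁.degree_pos_iff_exists_adj v₁).mp (h₁.1 v₁)
      have hT : G₁.IsTotalDomSet ↑(insert a0 A₁) := by
        intro x
        by_cases hx : x = v₁
        · exact ⟨a0, Finset.mem_coe.mpr (Finset.mem_insert_self _ _), hx ▸ ha0⟩
        · obtain ⟨q, hq, hqadj⟩ := domA x hx
          exact ⟨q, Finset.mem_coe.mpr (Finset.mem_insert_of_mem hq), hqadj⟩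
      have := tdn_le hT
      have := Finset.card_insert_le a0 A₁
      omega
    have hPrTDS : (∃ b ∈ B₁, G₂.Adj v₂ b.1) → m₂ ≤ B₁.card + 1 := by
      rintro ⟨b, hb, hadj⟩
      have hT : G₂.IsTotalDomSet ↑(insert v₂ (B₁.map valE)) := by
        intro y
        by_cases hy : y = v₂
        · refine ⟨b.1, Finset.mem_coe.mpr (Finset.mem_insert_of_mem
            (Finset.mem_map_of_mem valE hb)), hy ▸ hadj⟩
        · rcases domB ⟨y, hy⟩ with ⟨q, hq, hqadj⟩ | ⟨-, hadj'⟩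
          · exact ⟨q.1, Finset.mem_coe.mpr (Finset.mem_insert_of_mem
              (Finset.mem_map_of_mem valE hq)), hqadj⟩
          · exact ⟨v₂, Finset.mem_coe.mpr (Finset.mem_insert_self _ _), hadj'.symm⟩
      have := tdn_le hT
      have h1 := Finset.card_insert_le v₂ (B₁.map valE)
      rw [Finset.card_map] at h1
      omega
    by_cases hPl : ∃ a ∈ A₁, G₁.Adj v₁ a
    · by_cases hPr : ∃ b ∈ B₁, G₂.Adj v₂ b.1
      · have h1 := hATDS hPl
        have h2 := hPrTDS hPr
        omega
      · push_neg at hPr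
        have h1 := hATDS hPl
        have hsub : Rfin₂ ⊆ B₁.map valE := by
          intro y hy
          rw [hRfin₂, Finset.mem_filter] at hy
          obtain ⟨p, ⟨hpv, hpadj⟩, hyp, -⟩ := partner hc₂ hy.2.1 hy.2.2
          obtain ⟨u, hu, hadj⟩ := hS (Sum.inr ⟨p, hpv⟩)
          cases u with
          | inl a => exact absurd ((adj_rl ⟨p, hpv⟩ a).mp hadj).2 hpadj
          | inr q =>
              have hqB : q ∈ B₁ := (memB₁ q).mpr (Finset.mem_coe.mp hu)
              have hqadj : G₂.Adj p q.1 := (adj_rr ⟨p, hpv⟩ q).mp hadj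
              obtain ⟨p2, -, -, huniq⟩ := partner hc₂ hpv hpadj
              have hy1 : y = p2 := huniq y hy.2.1 hy.2.2 hyp.symm
              have hq1 : q.1 = p2 := huniq q.1 q.2 (hPr q hqB) hqadj
              rw [Finset.mem_map]
              exact ⟨q, hqB, hq1.trans hy1.symm⟩
        have h2 : Rfin₂.card ≤ B₁.card := by
          have := Finset.card_le_card hsub
          rw [Finset.card_map] at this
          exact this
        omega
    · have hPr : ∃ b ∈ B₁, G₂.Adj v₂ b.1 := domv.resolve_left hPl
      push_neg at hPl
      by_cases hPS : (Sum.inl v₁ : V₁ ⊕ {x : V₂ // x ≠ v₂}) ∈ S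
      · have hsub : Rfin₁ ⊆ A₁ := by
          intro y hy
          rw [hRfin₁, Finset.mem_filter] at hy
          obtain ⟨p, ⟨hpv, hpadj⟩, hyp, -⟩ := partner hc₁ hy.2.1 hy.2.2
          obtain ⟨u, hu, hadj⟩ := hS (Sum.inl p)
          cases u with
          | inr b => exact absurd ((adj_lr p b).mp hadj).1 hpv
          | inl q =>
              have hqA : q ∈ A₁ := (memA₁ q).mpr (Finset.mem_coe.mp hu)
              have hqadj : G₁.Adj p q := (adj_ll p q).mp hadj
              have hqv : q ≠ v₁ := by
                rintro rfl
                exact hpadj hqadj.symm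
              obtain ⟨p2, -, -, huniq⟩ := partner hc₁ hpv hpadj
              have hy1 : y = p2 := huniq y hy.2.1 hy.2.2 hyp.symm
              have hq1 : q = p2 := huniq q hqv (hPl q hqA) hqadj
              rw [show y = q from hy1.trans hq1.symm]
              exact hqA
        have hv₁A : v₁ ∈ A₁ := (memA₁ v₁).mpr hPS
        have hnotin : v₁ ∉ Rfin₁ := by
          rw [hRfin₁, Finset.mem_filter]
          rintro ⟨-, h, -⟩
          exact h rfl
        have hsub2 : insert v₁ Rfin₁ ⊆ A₁ := Finset.insert_subset hv₁A hsub
        have h1 : m₁ ≤ A₁.card := by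
          have := Finset.card_le_card hsub2
          rw [Finset.card_insert_of_notMem hnotin] at this
          omega
        have h2 := hPrTDS hPr
        omega
      · obtain ⟨b, hb, hbadj⟩ := hPr
        have hT : G₂.IsTotalDomSet ↑(B₁.map valE) := by
          intro y
          by_cases hy : y = v₂
          · exact ⟨b.1, Finset.mem_coe.mpr (Finset.mem_map_of_mem valE hb), hy ▸ hbadj⟩
          · rcases domB ⟨y, hy⟩ with ⟨q, hq, hqadj⟩ | ⟨hvS, -⟩
            · exact ⟨q.1, Finset.mem_coe.mpr (Finset.mem_map_of_mem valE hq), hqadj⟩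
            · exact absurd hvS hPS
        have h2 := tdn_le hT
        rw [Finset.card_map, hm₂] at h2
        have h1 := hATDS1
        omega
  -- total domination number of A
  have htdn : A.totalDomNum = m₁ + m₂ - 1 := by
    obtain ⟨S, hS, hc⟩ := tdn_exists hAiso
    have := hlb S hS
    rw [hc] at this
    omega
  -- criticality
  have hcritA : ∀ x : V₁ ⊕ {x : V₂ // x ≠ v₂},
      (A.deleteVert x).totalDomNum < A.totalDomNum := by
    intro x
    have hgoal : ∃ S : Finset (V₁ ⊕ {x : V₂ // x ≠ v₂}), (∀ u ∈ S, u ≠ x) ∧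
        (∀ w, w ≠ x → ∃ u ∈ S, A.Adj w u) ∧ S.card ≤ m₁ + m₂ - 2 := by
      cases x with
      | inl x₁ =>
          obtain ⟨S₁, hS₁x, hS₁dom, hS₁c⟩ := crit_witness hδ₁ h₁ x₁
          obtain ⟨S₂, hS₂x, hS₂dom, hS₂c⟩ := crit_witness hδ₂ h₂ v₂
          rw [hm₁] at hS₁c; rw [hm₂] at hS₂c
          refine ⟨S₁.map inlE ∪ S₂.image f, ?_, ?_, ?_⟩
          · intro u hu
            rcases Finset.mem_union.mp hu with hu | hu
            · rw [Finset.mem_map] at hu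
              obtain ⟨s, hs, rfl⟩ := hu
              simp only [hinlE, Function.Embedding.coeFn_mk]
              exact fun h => hS₁x s hs (Sum.inl_injective h)
            · rw [Finset.mem_image] at hu
              obtain ⟨s, hs, rfl⟩ := hu
              rw [hfne s (hS₂x s hs)]
              exact fun h => Sum.inr_ne_inl h
          · intro w hw
            cases w with
            | inl z =>
                have hz : z ≠ x₁ := fun h => hw (h ▸ rfl)
                obtain ⟨u, hu, hadj⟩ := hS₁dom z hz
                exact ⟨Sum.inl u, Finset.mem_coe.mpr
                  (Finset.mem_union_left _ (Finset.mem_map_of_mem inlE hu)),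
                  (adj_ll z u).mpr hadj⟩
            | inr y =>
                obtain ⟨u, hu, hadj⟩ := hS₂dom y.1 y.2
                have hu2 : u ≠ v₂ := hS₂x u hu
                refine ⟨Sum.inr ⟨u, hu2⟩, Finset.mem_coe.mpr (Finset.mem_union_right _ ?_),
                  (adj_rr y ⟨u, hu2⟩).mpr hadj⟩
                rw [← hfne u hu2]
                exact Finset.mem_image_of_mem f hu
          · have h1 := Finset.card_union_le (S₁.map inlE) (S₂.image f)
            have h2 := Finset.card_image_le (s := S₂) (f := f)
            rw [Finset.card_map] at h1
            omega
      | inr x₂ =>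
          obtain ⟨S₁, hS₁x, hS₁dom, hS₁c⟩ := crit_witness hδ₁ h₁ v₁
          obtain ⟨S₂, hS₂x, hS₂dom, hS₂c⟩ := crit_witness hδ₂ h₂ x₂.1
          rw [hm₁] at hS₁c; rw [hm₂] at hS₂c
          refine ⟨S₁.map inlE ∪ S₂.image f, ?_, ?_, ?_⟩
          · intro u hu
            rcases Finset.mem_union.mp hu with hu | hu
            · rw [Finset.mem_map] at hu
              obtain ⟨s, hs, rfl⟩ := hu
              simp only [hinlE, Function.Embedding.coeFn_mk]
              exact fun h => Sum.inl_ne_inr h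
            · rw [Finset.mem_image] at hu
              obtain ⟨s, hs, rfl⟩ := hu
              by_cases hsv : s = v₂
              · rw [hsv, hfv]
                exact fun h => Sum.inl_ne_inr h
              · rw [hfne s hsv]
                intro h
                exact hS₂x s hs (congrArg Subtype.val (Sum.inr_injective h))
          · intro w hw
            cases w with
            | inl z =>
                by_cases hz : z = v₁
                · have hvx : v₂ ≠ x₂.1 := fun h => x₂.2 h.symm
                  obtain ⟨u, hu, hadj⟩ := hS₂dom v₂ hvx
                  have hu2 : u ≠ v₂ := hadj.ne'
                  refine ⟨Sum.inr ⟨u, hu2⟩, Finset.mem_coe.mpr (Finset.mem_union_right _ ?_), ?_⟩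
                  · rw [← hfne u hu2]
                    exact Finset.mem_image_of_mem f hu
                  · rw [hz]
                    exact (adj_lr v₁ ⟨u, hu2⟩).mpr ⟨rfl, hadj⟩
                · obtain ⟨u, hu, hadj⟩ := hS₁dom z hz
                  exact ⟨Sum.inl u, Finset.mem_coe.mpr
                    (Finset.mem_union_left _ (Finset.mem_map_of_mem inlE hu)),
                    (adj_ll z u).mpr hadj⟩
            | inr y =>
                have hy : y.1 ≠ x₂.1 := by
                  intro h
                  exact hw (congrArg Sum.inr (Subtype.ext h))
                obtain ⟨u, hu, hadj⟩ := hS₂dom y.1 hy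
                by_cases hu2 : u = v₂
                · have hadv := hadj
                  rw [hu2] at hadv
                  have hfu : f u = Sum.inl v₁ := by rw [hu2, hfv]
                  refine ⟨Sum.inl v₁, Finset.mem_coe.mpr (Finset.mem_union_right _ ?_),
                    (adj_rl y v₁).mpr ⟨rfl, hadv.symm⟩⟩
                  rw [← hfu]
                  exact Finset.mem_image_of_mem f hu
                · refine ⟨Sum.inr ⟨u, hu2⟩, Finset.mem_coe.mpr (Finset.mem_union_right _ ?_),
                    (adj_rr y ⟨u, hu2⟩).mpr hadj⟩
                  rw [← hfne u hu2]
                  exact Finset.mem_image_of_mem f hu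
          · have h1 := Finset.card_union_le (S₁.map inlE) (S₂.image f)
            have h2 := Finset.card_image_le (s := S₂) (f := f)
            rw [Finset.card_map] at h1
            omega
    obtain ⟨S, hxS, hdom, hcard⟩ := hgoal
    have hle : (A.deleteVert x).totalDomNum ≤ S.card := tdn_deleteVert_le (G := A) hxS hdom
    rw [htdn]
    omega
  -- degrees
  have hdeg_inl : ∀ a : V₁, a ≠ v₁ → A.degree (Sum.inl a) = G₁.degree a := by
    intro a ha
    rw [← card_neighborFinset_eq_degree, ← card_neighborFinset_eq_degree]
    have hnb : A.neighborFinset (Sum.inl a) = (G₁.neighborFinset a).map inlE := by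
      ext w
      rw [mem_neighborFinset, Finset.mem_map]
      cases w with
      | inl b =>
          constructor
          · intro h
            exact ⟨b, (mem_neighborFinset _ _ _).mpr ((adj_ll a b).mp h), rfl⟩
          · rintro ⟨b', hb', hb⟩
            have : b' = b := Sum.inl_injective hb
            subst this
            exact (adj_ll a b').mpr ((mem_neighborFinset _ _ _).mp hb')
      | inr b =>
          constructor
          · intro h
            exact absurd ((adj_lr a b).mp h).1 ha
          · rintro ⟨b', -, hb⟩
            exact (Sum.inl_ne_inr hb).elim
    rw [hnb, Finset.card_map]
  have hdeg_inr : ∀ y : {x : V₂ // x ≠ v₂}, A.degree (Sum.inr y) = G₂.degree y.1 := by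
    intro y
    rw [← card_neighborFinset_eq_degree, ← card_neighborFinset_eq_degree]
    have hnb : A.neighborFinset (Sum.inr y) = (G₂.neighborFinset y.1).image f := by
      ext w
      rw [mem_neighborFinset, Finset.mem_image]
      cases w with
      | inl b =>
          constructor
          · intro h
            have h' := (adj_rl y b).mp h
            refine ⟨v₂, (mem_neighborFinset _ _ _).mpr h'.2.symm, ?_⟩
            rw [hfv, h'.1]
          · rintro ⟨t, ht, hft⟩
            by_cases htv : t = v₂
            · rw [htv, hfv] at hft
              have hb : v₁ = b := Sum.inl_injective hft
              have had : G₂.Adj y.1 t := (mem_neighborFinset _ _ _).mp ht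
              rw [htv] at had
              exact (adj_rl y b).mpr ⟨hb.symm, had.symm⟩
            · rw [hfne t htv] at hft
              exact (Sum.inr_ne_inl hft).elim
      | inr b =>
          constructor
          · intro h
            refine ⟨b.1, (mem_neighborFinset _ _ _).mpr ((adj_rr y b).mp h), ?_⟩
            rw [hfne b.1 b.2]
          · rintro ⟨t, ht, hft⟩
            by_cases htv : t = v₂
            · rw [htv, hfv] at hft
              exact (Sum.inl_ne_inr hft).elim
            · rw [hfne t htv] at hft
              have heq : (⟨t, htv⟩ : {x : V₂ // x ≠ v₂}) = b := Sum.inr_injective hft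
              have ht1 : t = b.1 := congrArg Subtype.val heq
              have had : G₂.Adj y.1 t := (mem_neighborFinset _ _ _).mp ht
              rw [ht1] at had
              exact (adj_rr y b).mpr had
    rw [hnb, Finset.card_image_of_injective _ hfinj]
  have hdeg_v : A.degree (Sum.inl v₁) = G₁.degree v₁ + G₂.degree v₂ := by
    rw [← card_neighborFinset_eq_degree, ← card_neighborFinset_eq_degree,
      ← card_neighborFinset_eq_degree]
    have hnb : A.neighborFinset (Sum.inl v₁)
        = (G₁.neighborFinset v₁).map inlE ∪ (G₂.neighborFinset v₂).image f := by
      ext w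
      rw [mem_neighborFinset, Finset.mem_union, Finset.mem_map, Finset.mem_image]
      cases w with
      | inl b =>
          constructor
          · intro h
            exact Or.inl ⟨b, (mem_neighborFinset _ _ _).mpr ((adj_ll v₁ b).mp h), rfl⟩
          · rintro (⟨b', hb', hb⟩ | ⟨t, ht, hft⟩)
            · have : b' = b := Sum.inl_injective hb
              subst this
              exact (adj_ll v₁ b').mpr ((mem_neighborFinset _ _ _).mp hb')
            · by_cases htv : t = v₂
              · have had : G₂.Adj v₂ t := (mem_neighborFinset _ _ _).mp ht
                rw [htv] at had
                exact absurd had (G₂.irrefl)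
              · rw [hfne t htv] at hft
                exact (Sum.inr_ne_inl hft).elim
      | inr b =>
          constructor
          · intro h
            have h' := (adj_lr v₁ b).mp h
            refine Or.inr ⟨b.1, (mem_neighborFinset _ _ _).mpr h'.2, ?_⟩
            rw [hfne b.1 b.2]
          · rintro (⟨b', -, hb⟩ | ⟨t, ht, hft⟩)
            · exact (Sum.inl_ne_inr hb).elim
            · by_cases htv : t = v₂
              · rw [htv, hfv] at hft
                exact (Sum.inl_ne_inr hft).elim
              · rw [hfne t htv] at hft
                have heq : (⟨t, htv⟩ : {x : V₂ // x ≠ v₂}) = b := Sum.inr_injective hft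
                have ht1 : t = b.1 := congrArg Subtype.val heq
                have had : G₂.Adj v₂ t := (mem_neighborFinset _ _ _).mp ht
                rw [ht1] at had
                exact (adj_lr v₁ b).mpr ⟨rfl, had⟩
    have hdisj2 : Disjoint ((G₁.neighborFinset v₁).map inlE) ((G₂.neighborFinset v₂).image f) := by
      rw [Finset.disjoint_left]
      rintro w hw hw'
      rw [Finset.mem_map] at hw
      rw [Finset.mem_image] at hw'
      obtain ⟨a, -, rfl⟩ := hw
      obtain ⟨t, ht, hft⟩ := hw'
      have htv : t ≠ v₂ := ((mem_neighborFinset _ _ _).mp ht).ne'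
      rw [hfne t htv] at hft
      exact Sum.inr_ne_inl hft
    rw [hnb, Finset.card_union_of_disjoint hdisj2, Finset.card_map,
      Finset.card_image_of_injective _ hfinj]
  have hmax : A.maxDegree = G₁.maxDegree + G₂.maxDegree := by
    apply le_antisymm
    · apply maxDegree_le_of_forall_degree_le
      intro w
      cases w with
      | inl a =>
          by_cases ha : a = v₁
          · rw [ha, hdeg_v, hv₁, hv₂]
          · rw [hdeg_inl a ha]
            exact le_trans (G₁.degree_le_maxDegree a) (Nat.le_add_right _ _)
      | inr y =>
          rw [hdeg_inr y]
          exact le_trans (G₂.degree_le_maxDegree y.1) (Nat.le_add_left _ _)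
    · calc G₁.maxDegree + G₂.maxDegree = A.degree (Sum.inl v₁) := by
            rw [hdeg_v, hv₁, hv₂]
        _ ≤ A.maxDegree := A.degree_le_maxDegree _
  -- cardinality
  have hcard2 : Fintype.card {x : V₂ // x ≠ v₂} + 1 = Fintype.card V₂ := by
    have hcg := Fintype.card_congr (Equiv.sumCompl (fun x : V₂ => x = v₂))
    rw [Fintype.card_sum, Fintype.card_subtype_eq] at hcg
    have hsame : Fintype.card {x : V₂ // ¬ x = v₂} = Fintype.card {x : V₂ // x ≠ v₂} :=
      Fintype.card_congr (Equiv.refl _)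
    omega
  have hpos₂ : 1 ≤ Fintype.card V₂ :=
    Fintype.card_pos_iff.mpr (nonempty_of_minDegree hδ₂)
  have hcardW : Fintype.card (V₁ ⊕ {x : V₂ // x ≠ v₂})
      = A.maxDegree + (m₁ + m₂ - 1) := by
    rw [Fintype.card_sum, hmax, hn₁]
    omega
  exact ⟨⟨fun w => (A.degree_pos_iff_exists_adj w).mpr (hAiso w),
    fun x _ => hcritA x⟩, htdn, hmax, hcardW⟩


end SimpleGraph
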